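/- For n ≥ 1, a binary cyclic sequence s of length 2^n has linear complexity c(s) = 2^n if and only if the weight of s is odd. -/

import Mathlib

/-- The operator `E + 1` on binary cyclic sequences of length `N`:
`((E + 1) s)(i) = s(i + 1) + s(i)`. -/
def dOp {N : ℕ} (s : ZMod N → ZMod 2) : ZMod N → ZMod 2 :=
  fun i => s (i + 1) + s i

/-- The linear complexity of a binary cyclic sequence: the least `c ≥ 0` with
`(E + 1)^c s = 0`. -/
noncomputable def linComp {N : ℕ} (s : ZMod N → ZMod 2) : ℕ :=
  sInf {c : ℕ | dOp^[c] s = 0}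

/-- The weight of a binary cyclic sequence: the number of positions equal to `1`. -/
noncomputable def seqWeight {N : ℕ} (s : ZMod N → ZMod 2) : ℕ :=
  {i : ZMod N | s i = 1}.ncard

open Finset

/-- The shift endomorphism. -/
private def shiftE (N : ℕ) : Module.End (ZMod 2) (ZMod N → ZMod 2) where
  toFun s := fun i => s (i + 1)
  map_add' _ _ := rfl
  map_smul' _ _ := rfl

private lemma shiftE_pow {N : ℕ} (j : ℕ) (s : ZMod N → ZMod 2) (i : ZMod N) :
    ((shiftE N ^ j) s) i = s (i + (j : ZMod N)) := by
  induction j generalizing i with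
  | zero => simp
  | succ j ih =>
    rw [pow_succ', Module.End.mul_apply]
    show ((shiftE N ^ j) s) (i + 1) = _
    rw [ih]
    push_cast
    ring_nf

private lemma dOp_iterate_eq {N : ℕ} (c : ℕ) (s : ZMod N → ZMod 2) :
    dOp^[c] s = ((shiftE N + 1) ^ c) s := by
  induction c with
  | zero => simp
  | succ c ih =>
    rw [Function.iterate_succ_apply', ih, pow_succ', Module.End.mul_apply]
    rfl

private lemma dOp_iterate_apply {N : ℕ} (c : ℕ) (s : ZMod N → ZMod 2) (i : ZMod N) :
    dOp^[c] s i = ∑ j ∈ range (c + 1), (c.choose j : ZMod 2) * s (i + (j : ZMod N)) := by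
  rw [dOp_iterate_eq, (Commute.one_right (shiftE N)).add_pow c, LinearMap.sum_apply,
    Finset.sum_apply]
  refine Finset.sum_congr rfl fun j hj => ?_
  rw [one_pow, mul_one, Module.End.mul_apply]
  have h1 : ((c.choose j : ℕ) : Module.End (ZMod 2) (ZMod N → ZMod 2)) s
      = ((c.choose j : ℕ) : ZMod 2) • s := by
    rw [Module.End.natCast_apply]
    ext x
    simp [Nat.cast_smul_eq_nsmul]
  rw [h1, map_smul]
  simp [shiftE_pow, smul_eq_mul]

private lemma choose_two_pow_sub_one_odd (n : ℕ) : ∀ j ≤ 2 ^ n - 1,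
    ¬ 2 ∣ (2 ^ n - 1).choose j := by
  intro j
  induction j with
  | zero => simp
  | succ j ih =>
    intro hj h2
    have hj' : j ≤ 2 ^ n - 1 := by omega
    have hpos : 1 ≤ 2 ^ n := Nat.one_le_two_pow
    have hps : (2 ^ n - 1) + 1 = 2 ^ n := by omega
    have hdvd : 2 ∣ (2 ^ n - 1).choose j + (2 ^ n - 1).choose (j + 1) := by
      have h := Nat.Prime.dvd_choose_pow (n := n) (k := j + 1) Nat.prime_two
        (by omega) (by omega)
      rwa [← hps, Nat.choose_succ_succ'] at h
    exact ih hj' (by omega)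

private lemma sum_shift {N : ℕ} [NeZero N] (s : ZMod N → ZMod 2) (i : ZMod N) :
    ∑ j ∈ range N, s (i + (j : ZMod N)) = ∑ x : ZMod N, s x := by
  rw [← Equiv.sum_comp (Equiv.addLeft i) s]
  refine Finset.sum_nbij' (fun j => (j : ZMod N)) (fun x => x.val) ?_ ?_ ?_ ?_ ?_
  · intro a _; exact Finset.mem_univ _
  · intro x _; exact Finset.mem_range.mpr (ZMod.val_lt x)
  · intro a ha; exact ZMod.val_cast_of_lt (Finset.mem_range.mp ha)
  · intro x _; exact ZMod.natCast_rightInverse x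
  · intro a _; rfl

private lemma sum_eq_weight {N : ℕ} [NeZero N] (s : ZMod N → ZMod 2) :
    ∑ x : ZMod N, s x = (seqWeight s : ZMod 2) := by
  classical
  have key : ∀ a : ZMod 2, a = if a = 1 then (1 : ZMod 2) else 0 := by decide
  calc ∑ x : ZMod N, s x
      = ∑ x : ZMod N, (if s x = 1 then (1 : ZMod 2) else 0) :=
        Finset.sum_congr rfl fun x _ => key (s x)
    _ = ((Finset.univ.filter fun x : ZMod N => s x = 1).card : ZMod 2) :=
        Finset.sum_boole _ _
    _ = (seqWeight s : ZMod 2) := by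
        rw [seqWeight, Set.ncard_eq_toFinset_card']
        congr 1
        simp [Set.toFinset_setOf]

theorem stmt_2 (n : ℕ) (hn : 1 ≤ n) (s : ZMod (2 ^ n) → ZMod 2) :
    linComp s = 2 ^ n ↔ Odd (seqWeight s) := by
  haveI : NeZero (2 ^ n) := ⟨(Nat.two_pow_pos n).ne'⟩
  have hN1 : 1 ≤ 2 ^ n := Nat.one_le_two_pow
  -- the sequence dOp^[2^n - 1] s is constant with value the weight mod 2
  have hconst : ∀ i : ZMod (2 ^ n), dOp^[2 ^ n - 1] s i = (seqWeight s : ZMod 2) := by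
    intro i
    rw [dOp_iterate_apply, Nat.sub_add_cancel hN1, ← sum_eq_weight s, ← sum_shift s i]
    refine Finset.sum_congr rfl fun j hj => ?_
    have hodd := choose_two_pow_sub_one_odd n j
      (by have := Finset.mem_range.mp hj; omega)
    have hc1 : (2 ^ n - 1).choose j % 2 = 1 := by omega
    have : (((2 ^ n - 1).choose j : ℕ) : ZMod 2) = 1 := by
      rw [← ZMod.natCast_mod, hc1, Nat.cast_one]
    rw [this, one_mul]
  -- dOp^[2^n] s = 0 always
  have hzero : dOp^[2 ^ n] s = 0 := by
    funext i
    rw [dOp_iterate_apply, Finset.sum_range_succ]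
    have hmid : ∑ j ∈ range (2 ^ n),
        (((2 ^ n).choose j : ZMod 2) * s (i + (j : ZMod (2 ^ n)))) = s i := by
      rw [Finset.sum_eq_single 0]
      · simp
      · intro j hj hj0
        have hd : 2 ∣ (2 ^ n).choose j :=
          Nat.Prime.dvd_choose_pow Nat.prime_two hj0
            (by have := Finset.mem_range.mp hj; omega)
        have : (((2 ^ n).choose j : ℕ) : ZMod 2) = 0 :=
          (ZMod.natCast_eq_zero_iff _ _).mpr hd
        rw [this, zero_mul]
      · intro h; exact absurd (Finset.mem_range.mpr (by omega)) h
    rw [hmid, Nat.choose_self, Nat.cast_one, one_mul, ZMod.natCast_self, add_zero,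
      Pi.zero_apply, CharTwo.add_self_eq_zero]
  have hup : ∀ c d : ℕ, c ≤ d → dOp^[c] s = 0 → dOp^[d] s = 0 := by
    intro c d hcd hc
    induction d, hcd using Nat.le_induction with
    | base => exact hc
    | succ d hd ihd =>
      rw [Function.iterate_succ_apply', ihd]
      funext i
      simp [dOp]
  constructor
  · intro h
    by_contra hodd
    have hw : (seqWeight s : ZMod 2) = 0 := by
      have h0 : seqWeight s % 2 = 0 := Nat.even_iff.mp (Nat.not_odd_iff_even.mp hodd)
      have hd : 2 ∣ seqWeight s := by omega
      exact (ZMod.natCast_eq_zero_iff _ _).mpr hd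
    have hz : (2 ^ n - 1) ∈ {c : ℕ | dOp^[c] s = 0} := by
      show dOp^[2 ^ n - 1] s = 0
      funext i
      rw [hconst i, hw, Pi.zero_apply]
    have hle := Nat.sInf_le hz
    unfold linComp at h
    omega
  · intro hodd
    have hw : (seqWeight s : ZMod 2) = 1 := by
      have h1 : seqWeight s % 2 = 1 := Nat.odd_iff.mp hodd
      rw [← ZMod.natCast_mod, h1, Nat.cast_one]
    have hne : dOp^[2 ^ n - 1] s ≠ 0 := by
      intro h0
      have h2 := congrFun h0 0
      rw [hconst 0, hw, Pi.zero_apply] at h2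
      exact one_ne_zero h2
    have hmemN : (2 ^ n) ∈ {c : ℕ | dOp^[c] s = 0} := hzero
    have hInfmem := Nat.sInf_mem (⟨2 ^ n, hmemN⟩ : {c : ℕ | dOp^[c] s = 0}.Nonempty)
    have hle : sInf {c : ℕ | dOp^[c] s = 0} ≤ 2 ^ n := Nat.sInf_le hmemN
    unfold linComp
    by_contra hne'
    have hlt : sInf {c : ℕ | dOp^[c] s = 0} < 2 ^ n := lt_of_le_of_ne hle hne'
    exact hne (hup _ _ (by omega) hInfmem)
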